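/- Let X and Y be ℤ-indexed cochain complexes of injective Λ-left-modules such that each component Xⁱ and Yⁱ is finitely generated, Xⁱ = 0 and Yⁱ = 0 for all i sufficiently small, and Hⁱ(X) = 0 and Hⁱ(Y) = 0 for all i sufficiently large. Then Hom_{K(Λ)}(X, Y), the k-vector space of homotopy classes of chain maps from X to Y, is finite-dimensional over k. -/

import Mathlib

open CategoryTheory CategoryTheory.Limits

namespace HomFinDimAux

variable {Λ : Type} [Ring Λ]

/-- Extension lemma: a map vanishing on the kernel of `d` extends along `d` into an
injective module. -/
lemma exists_extension {A B Q : ModuleCat.{0} Λ} [Injective Q] (d : A ⟶ B) (g : A ⟶ Q)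
    (hg : ∀ a : A, d a = 0 → g a = 0) : ∃ c : B ⟶ Q, d ≫ c = g := by
  classical
  let dl : A →ₗ[Λ] B := d.hom
  let gl : A →ₗ[Λ] Q := g.hom
  have hker : LinearMap.ker dl ≤ LinearMap.ker gl := fun a ha => hg a ha
  let φ : ↥(LinearMap.range dl) →ₗ[Λ] Q :=
    (Submodule.liftQ (LinearMap.ker dl) gl hker).comp
      (LinearMap.quotKerEquivRange dl).symm.toLinearMap
  have hφ : ∀ a : A, φ ⟨dl a, LinearMap.mem_range_self dl a⟩ = gl a := by
    intro a
    have h1 : (LinearMap.quotKerEquivRange dl).symm ⟨dl a, LinearMap.mem_range_self dl a⟩ =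
        Submodule.Quotient.mk a := by
      apply (LinearMap.quotKerEquivRange dl).injective
      simp [LinearMap.quotKerEquivRange_apply_mk]
    simp only [φ, LinearMap.comp_apply, LinearEquiv.coe_toLinearMap, h1]
    simp [Submodule.liftQ_apply]
  let φ' : ModuleCat.of Λ ↥(LinearMap.range dl) ⟶ Q := ModuleCat.ofHom φ
  let ι : ModuleCat.of Λ ↥(LinearMap.range dl) ⟶ B := ModuleCat.ofHom ((LinearMap.range dl).subtype)
  haveI : Mono ι := (ModuleCat.mono_iff_injective _).mpr (Submodule.injective_subtype _)
  obtain ⟨c, hc⟩ := Injective.factors φ' ι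
  refine ⟨c, ?_⟩
  ext a
  have h2 := congrArg (fun ψ => ψ (⟨dl a, LinearMap.mem_range_self dl a⟩ : LinearMap.range dl)) hc
  exact h2.trans (hφ a)

variable {X Y : CochainComplex (ModuleCat.{0} Λ) ℤ}

lemma eqToHom_comp_d' (a b l : ℤ) (h : a = b) :
    (eqToHom (congrArg X.X h) : X.X a ⟶ X.X b) ≫ X.d b l = X.d a l := by
  subst h; simp

/-- Partial homotopy data at degree `j`. -/
structure St (f : X ⟶ Y) (j : ℤ) where
  a : X.X j ⟶ Y.X (j - 1)
  b : X.X (j + 1) ⟶ Y.X j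
  rel : f.f j = a ≫ Y.d (j - 1) j + X.d j (j + 1) ≫ b

/-- Transport `St` along an equality of indices. -/
def castSt {f : X ⟶ Y} {j j' : ℤ} (h : j = j') (s : St f j) : St f j' := h ▸ s

lemma castSt_a {f : X ⟶ Y} {j j' : ℤ} (h : j = j') (s : St f j) :
    (castSt h s).a = eqToHom (by rw [h]) ≫ s.a ≫ eqToHom (by rw [h]) := by
  subst h; simp [castSt]

lemma castSt_b {f : X ⟶ Y} {j j' : ℤ} (h : j = j') (s : St f j) :
    (castSt h s).b = eqToHom (by rw [h]) ≫ s.b ≫ eqToHom (by rw [h]) := by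
  subst h; simp [castSt]

section Step

variable (hYinj : ∀ i : ℤ, Injective (Y.X i))

/-- The inductive step: extend partial homotopy data from degree `j` to degree `j+1`. -/
noncomputable def stepSt (f : X ⟶ Y) (j : ℤ)
    (hex : ∀ x : X.X (j + 1), X.d (j + 1) (j + 1 + 1) x = 0 →
      ∃ w : X.X j, X.d j (j + 1) w = x)
    (s : St f j) : St f (j + 1) :=
  haveI := hYinj (j + 1)
  let g : X.X (j + 1) ⟶ Y.X (j + 1) := f.f (j + 1) - s.b ≫ Y.d j (j + 1)
  have hg : ∀ x : X.X (j + 1), X.d (j + 1) (j + 1 + 1) x = 0 → g x = 0 := by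
    intro x hx
    obtain ⟨w, hw⟩ := hex x hx
    show f.f (j + 1) x - Y.d j (j + 1) (s.b x) = 0
    have hc : Y.d j (j + 1) (f.f j w) = f.f (j + 1) (X.d j (j + 1) w) :=
      congrArg (fun ψ => ψ w) (f.comm j (j + 1))
    have hr : f.f j w = Y.d (j - 1) j (s.a w) + s.b (X.d j (j + 1) w) :=
      congrArg (fun ψ => ψ w) s.rel
    have h0 : Y.d j (j + 1) (Y.d (j - 1) j (s.a w)) = 0 :=
      congrArg (fun ψ => ψ (s.a w)) (Y.d_comp_d (j - 1) j (j + 1))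
    rw [← hw, ← hc, hr, map_add, h0, zero_add, sub_self]
  { a := s.b ≫ eqToHom (by congr 1; omega)
    b := (exists_extension (X.d (j + 1) (j + 1 + 1)) g hg).choose
    rel := by
      have hc := (exists_extension (X.d (j + 1) (j + 1 + 1)) g hg).choose_spec
      have h1 : (s.b ≫ eqToHom (by congr 1; omega : Y.X j = Y.X (j + 1 - 1))) ≫
          Y.d (j + 1 - 1) (j + 1) = s.b ≫ Y.d j (j + 1) := by
        rw [Category.assoc, eqToHom_comp_d' (X := Y) j (j + 1 - 1) (j + 1) (by omega)]
      rw [h1, hc]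
      simp [g] }

lemma stepSt_a (f : X ⟶ Y) (j : ℤ)
    (hex : ∀ x : X.X (j + 1), X.d (j + 1) (j + 1 + 1) x = 0 →
      ∃ w : X.X j, X.d j (j + 1) w = x)
    (s : St f j) :
    (stepSt hYinj f j hex s).a = s.b ≫ eqToHom (by congr 1; omega) := rfl

end Step

section Null

variable (f : X ⟶ Y) (N : ℤ)
  (hYinj : ∀ i : ℤ, Injective (Y.X i))
  (hex : ∀ j : ℤ, N ≤ j → ∀ x : X.X (j + 1), X.d (j + 1) (j + 1 + 1) x = 0 →
    ∃ w : X.X j, X.d j (j + 1) w = x)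
  (hf : ∀ i : ℤ, i ≤ N → f.f i = 0)

/-- The recursively constructed sequence of partial homotopies. -/
noncomputable def Gseq : ∀ n : ℕ, St f (N + n)
  | 0 => ⟨0, 0, by
      rw [hf (N + ((0 : ℕ) : ℤ)) (by simp)]
      simp⟩
  | (n + 1) => castSt (by push_cast; ring)
      (stepSt hYinj f (N + n) (hex (N + n) (by omega)) (Gseq n))

lemma Gseq_zero_a : (Gseq f N hYinj hex hf 0).a = 0 := rfl

lemma Gseq_succ (n : ℕ) : Gseq f N hYinj hex hf (n + 1) = castSt (by push_cast; ring)
    (stepSt hYinj f (N + n) (hex (N + n) (by omega)) (Gseq f N hYinj hex hf n)) := rfl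

lemma Gseq_cast (m m' : ℕ) (h : m = m') (i : ℤ) (h₁ : N + (m : ℤ) = i) (h₂ : N + (m' : ℤ) = i) :
    castSt h₁ (Gseq f N hYinj hex hf m) = castSt h₂ (Gseq f N hYinj hex hf m') := by
  subst h; rfl

/-- The full family of partial homotopies. -/
noncomputable def Tfam (j : ℤ) : St f j :=
  if h : N ≤ j then castSt (by omega) (Gseq f N hYinj hex hf (j - N).toNat)
  else ⟨0, 0, by simp [hf j (by omega)]⟩

lemma Tfam_pos (j : ℤ) (h : N ≤ j) : Tfam f N hYinj hex hf j =
    castSt (by omega) (Gseq f N hYinj hex hf (j - N).toNat) := dif_pos h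

lemma Tfam_neg_a (j : ℤ) (h : ¬ N ≤ j) : (Tfam f N hYinj hex hf j).a = 0 := by
  rw [Tfam, dif_neg h]

lemma Tfam_neg_b (j : ℤ) (h : ¬ N ≤ j) : (Tfam f N hYinj hex hf j).b = 0 := by
  rw [Tfam, dif_neg h]

lemma Tfam_compat (i : ℤ) : (Tfam f N hYinj hex hf i).a =
    eqToHom (show X.X i = X.X (i - 1 + 1) by congr 1; omega) ≫
      (Tfam f N hYinj hex hf (i - 1)).b := by
  by_cases hi : N ≤ i
  · by_cases hi' : N ≤ i - 1
    · -- N < i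
      have e1 : (i - N).toNat = (i - 1 - N).toNat + 1 := by omega
      rw [Tfam_pos f N hYinj hex hf i hi, Tfam_pos f N hYinj hex hf (i - 1) hi']
      rw [Gseq_cast f N hYinj hex hf (i - N).toNat ((i - 1 - N).toNat + 1) e1 i
        (by omega) (by omega)]
      rw [castSt_a, Gseq_succ, castSt_a, castSt_b, stepSt_a]
      simp
    · -- i = N
      have e0 : (i - N).toNat = 0 := by omega
      rw [Tfam_pos f N hYinj hex hf i hi, Tfam_neg_b f N hYinj hex hf (i - 1) hi']
      rw [Gseq_cast f N hYinj hex hf (i - N).toNat 0 e0 i (by omega) (by omega)]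
      rw [castSt_a, Gseq_zero_a]
      simp
  · have hi' : ¬ N ≤ i - 1 := by omega
    rw [Tfam_neg_a f N hYinj hex hf i hi, Tfam_neg_b f N hYinj hex hf (i - 1) hi']
    simp

/-- Build a nullhomotopy of a chain map vanishing in degrees `≤ N`. -/
noncomputable def nullHomotopy : Homotopy f 0 := by
  classical
  refine ⟨fun i j => if h : j + 1 = i then
      (eqToHom (show X.X i = X.X (j + 1) by rw [h]) ≫ (Tfam f N hYinj hex hf j).b) else 0,
      ?_, ?_⟩
  · intro i j h
    exact dif_neg h
  · intro i
    have hrel1 : (ComplexShape.up ℤ).Rel i (i + 1) := by simp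
    have hrel2 : (ComplexShape.up ℤ).Rel (i - 1) i := by simp
    rw [dNext_eq _ hrel1, prevD_eq _ hrel2]
    rw [dif_pos rfl, dif_pos (show (i - 1) + 1 = i by omega)]
    simp only [eqToHom_refl, Category.id_comp]
    rw [(Tfam f N hYinj hex hf i).rel, Tfam_compat f N hYinj hex hf i]
    simp only [HomologicalComplex.zero_f_apply, add_zero, Category.assoc]
    abel

end Null

end HomFinDimAux

theorem hom_finiteDimensional (k : Type) [Field k] (Λ : Type) [Ring Λ] [Algebra k Λ]
    [FiniteDimensional k Λ]
    (X Y : CochainComplex (ModuleCat.{0} Λ) ℤ)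
    (hXinj : ∀ i : ℤ, Injective (X.X i)) (hYinj : ∀ i : ℤ, Injective (Y.X i))
    (hXfg : ∀ i : ℤ, Module.Finite Λ (X.X i)) (hYfg : ∀ i : ℤ, Module.Finite Λ (Y.X i))
    (hXbd : ∃ n : ℤ, ∀ i : ℤ, i < n → IsZero (X.X i))
    (hYbd : ∃ n : ℤ, ∀ i : ℤ, i < n → IsZero (Y.X i))
    (hXcoh : ∃ n : ℤ, ∀ i : ℤ, n < i → IsZero (X.homology i))
    (hYcoh : ∃ n : ℤ, ∀ i : ℤ, n < i → IsZero (Y.homology i)) :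
    FiniteDimensional k
      ((HomotopyCategory.quotient (ModuleCat.{0} Λ) (ComplexShape.up ℤ)).obj X ⟶
       (HomotopyCategory.quotient (ModuleCat.{0} Λ) (ComplexShape.up ℤ)).obj Y) := by
  classical
  obtain ⟨n₀, hn₀⟩ := hXbd
  obtain ⟨m, hm⟩ := hXcoh
  set N : ℤ := max n₀ m with hN
  -- exactness of X in degrees > N, elementwise
  have hex : ∀ j : ℤ, N ≤ j → ∀ x : X.X (j + 1), X.d (j + 1) (j + 1 + 1) x = 0 →
      ∃ w : X.X j, X.d j (j + 1) w = x := by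
    intro j hj x hx
    have hz : IsZero (X.homology (j + 1)) := hm (j + 1) (by omega)
    have hexact : X.ExactAt (j + 1) :=
      (HomologicalComplex.exactAt_iff_isZero_homology X (j + 1)).2 hz
    rw [X.exactAt_iff' j (j + 1) (j + 1 + 1) (by simp) (by simp)] at hexact
    rw [ShortComplex.moduleCat_exact_iff] at hexact
    exact hexact x hx
  letI := fun (M : ModuleCat.{0} Λ) => ModuleCat.moduleOfAlgebraModule (k := k) M
  letI := fun (M : ModuleCat.{0} Λ) => ModuleCat.isScalarTower_of_algebra_moduleCat (k := k) M
  -- the comparison map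
  let Φ : (X ⟶ Y) →ₗ[k] ((i : Finset.Icc n₀ N) → (X.X i.1 →ₗ[Λ] Y.X i.1)) :=
    { toFun := fun f i => (f.f i.1).hom
      map_add' := fun f g => rfl
      map_smul' := fun c f => rfl }
  -- Null-homotopy for elements of the kernel of Φ
  have hker : ∀ f : X ⟶ Y, Φ f = 0 →
      (HomotopyCategory.quotient (ModuleCat.{0} Λ) (ComplexShape.up ℤ)).map f = 0 := by
    intro f hf
    have hf0 : ∀ i : ℤ, i ≤ N → f.f i = 0 := by
      intro i hi
      by_cases hin : n₀ ≤ i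
      · exact ModuleCat.hom_ext (congrFun hf ⟨i, Finset.mem_Icc.2 ⟨hin, hi⟩⟩)
      · exact (hn₀ i (by omega)).eq_of_src _ _
    have H : Homotopy f 0 := HomFinDimAux.nullHomotopy f N hYinj hex hf0
    rw [HomotopyCategory.eq_of_homotopy f 0 H]
    exact Functor.map_zero _ _ _
  -- the quotient functor as a linear map
  let q : (X ⟶ Y) →ₗ[k]
      ((HomotopyCategory.quotient (ModuleCat.{0} Λ) (ComplexShape.up ℤ)).obj X ⟶
       (HomotopyCategory.quotient (ModuleCat.{0} Λ) (ComplexShape.up ℤ)).obj Y) :=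
    Functor.mapLinearMap k (HomotopyCategory.quotient (ModuleCat.{0} Λ) (ComplexShape.up ℤ))
  have hq : Function.Surjective q :=
    fun g => (HomotopyCategory.quotient (ModuleCat.{0} Λ) (ComplexShape.up ℤ)).map_surjective g
  have hle : LinearMap.ker Φ ≤ LinearMap.ker q := fun f hf => hker f hf
  -- finite dimensionality of the codomain of Φ
  haveI : ∀ i : ℤ, Module.Finite k (X.X i) := fun i => Module.Finite.trans Λ (X.X i)
  haveI : ∀ i : ℤ, Module.Finite k (Y.X i) := fun i => Module.Finite.trans Λ (Y.X i)
  haveI : ∀ i : ℤ, FiniteDimensional k (X.X i →ₗ[Λ] Y.X i) := by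
    intro i
    exact FiniteDimensional.of_injective
      (LinearMap.restrictScalarsₗ k Λ (X.X i) (Y.X i) k)
      (LinearMap.restrictScalars_injective k)
  haveI : FiniteDimensional k ((i : Finset.Icc n₀ N) → (X.X i.1 →ₗ[Λ] Y.X i.1)) :=
    Module.Finite.pi
  -- conclude
  haveI : FiniteDimensional k ((X ⟶ Y) ⧸ LinearMap.ker Φ) :=
    Module.Finite.equiv (LinearMap.quotKerEquivRange Φ).symm
  have hsurj : Function.Surjective (Submodule.liftQ (LinearMap.ker Φ) q hle) := by
    intro g
    obtain ⟨f, hfg⟩ := hq g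
    exact ⟨Submodule.Quotient.mk f, by simpa using hfg⟩
  exact Module.Finite.of_surjective (Submodule.liftQ (LinearMap.ker Φ) q hle) hsurj
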